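/- arXiv:2102.01943 — 2 statements merged into one kernel-verified Lean document; each statement's English description precedes it below -/
import Mathlib

section
/- There exists a constant C > 0 such that for all n ∈ ℕ and all Fourier frequencies λ_{j,n} = 2πj/n, λ_{k,n} = 2πk/n one has | (1/(4π²n²)) Σ_{t1,t2,t3,t4=1}^{n} c(t1−t4, t2−t4, t3−t4) e^{−i(t1−t2)λ_{j,n} + i(t3−t4)λ_{k,n}} − (2π/n) F(λ_{j,n}, −λ_{j,n}, −λ_{k,n}) | ≤ C/n². -/
open Complex Finset
open scoped Real

/-- The fourth-order cumulant spectral density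
`F(λ,μ,η) = (2π)^{-3} Σ_{h1,h2,h3∈ℤ} c(h1,h2,h3) e^{−i(h1 λ + h2 μ + h3 η)}`. -/
noncomputable def cumSpecDens (c : ℤ × ℤ × ℤ → ℂ) (l μ η : ℝ) : ℂ :=
  ((2 * π : ℂ) ^ 3)⁻¹ *
    ∑' h : ℤ × ℤ × ℤ,
      c h * Complex.exp (-Complex.I * ((h.1 : ℂ) * (l : ℂ) + (h.2.1 : ℂ) * (μ : ℂ) +
        (h.2.2 : ℂ) * (η : ℂ)))


lemma count_single (n : ℕ) (h : ℤ) :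
    ((Finset.Icc (1:ℤ) n).filter (fun t => t + h ∉ Finset.Icc (1:ℤ) n)).card ≤ h.natAbs := by
  have hs : ((Finset.Icc (1:ℤ) n).filter (fun t => t + h ∉ Finset.Icc (1:ℤ) n)) ⊆
      Finset.Ico 1 (1 - h) ∪ Finset.Ioc ((n:ℤ) - h) n := by
    intro t ht
    simp only [Finset.mem_filter, Finset.mem_Icc, Finset.mem_union, Finset.mem_Ico,
      Finset.mem_Ioc, not_and, not_le] at *
    omega
  calc ((Finset.Icc (1:ℤ) n).filter (fun t => t + h ∉ Finset.Icc (1:ℤ) n)).card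
      ≤ (Finset.Ico (1:ℤ) (1 - h) ∪ Finset.Ioc ((n:ℤ) - h) n).card := Finset.card_le_card hs
    _ ≤ (Finset.Ico (1:ℤ) (1 - h)).card + (Finset.Ioc ((n:ℤ) - h) n).card :=
        Finset.card_union_le _ _
    _ ≤ _ := by rw [Int.card_Ico, Int.card_Ioc]; omega

noncomputable def Tset (n : ℕ) (h : ℤ × ℤ × ℤ) : Finset ℤ :=
  (Finset.Icc (1:ℤ) n).filter (fun t => t + h.1 ∈ Finset.Icc (1:ℤ) n ∧
    t + h.2.1 ∈ Finset.Icc (1:ℤ) n ∧ t + h.2.2 ∈ Finset.Icc (1:ℤ) n)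

lemma N_bound (n : ℕ) (h : ℤ × ℤ × ℤ) :
    |((Tset n h).card : ℝ) - (n : ℝ)| ≤ |(h.1:ℝ)| + |(h.2.1:ℝ)| + |(h.2.2:ℝ)| := by
  classical
  have hle : (Tset n h).card ≤ n := by
    have := Finset.card_filter_le (Finset.Icc (1:ℤ) n) (fun t => t + h.1 ∈ Finset.Icc (1:ℤ) n ∧
      t + h.2.1 ∈ Finset.Icc (1:ℤ) n ∧ t + h.2.2 ∈ Finset.Icc (1:ℤ) n)
    simpa [Tset, Int.card_Icc] using this
  have hcompl : n - (Tset n h).card ≤ h.1.natAbs + h.2.1.natAbs + h.2.2.natAbs := by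
    have hsplit := Finset.card_filter_add_card_filter_not
      (s := Finset.Icc (1:ℤ) n) (p := fun t => t + h.1 ∈ Finset.Icc (1:ℤ) n ∧
        t + h.2.1 ∈ Finset.Icc (1:ℤ) n ∧ t + h.2.2 ∈ Finset.Icc (1:ℤ) n)
    have hIcc : (Finset.Icc (1:ℤ) n).card = n := by
      rw [Int.card_Icc]; omega
    have hsub : ((Finset.Icc (1:ℤ) n).filter (fun t => ¬(t + h.1 ∈ Finset.Icc (1:ℤ) n ∧
        t + h.2.1 ∈ Finset.Icc (1:ℤ) n ∧ t + h.2.2 ∈ Finset.Icc (1:ℤ) n))) ⊆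
        ((Finset.Icc (1:ℤ) n).filter (fun t => t + h.1 ∉ Finset.Icc (1:ℤ) n)) ∪
        ((Finset.Icc (1:ℤ) n).filter (fun t => t + h.2.1 ∉ Finset.Icc (1:ℤ) n)) ∪
        ((Finset.Icc (1:ℤ) n).filter (fun t => t + h.2.2 ∉ Finset.Icc (1:ℤ) n)) := by
      intro t ht
      simp only [Finset.mem_filter, Finset.mem_union] at *
      tauto
    have hcard : ((Finset.Icc (1:ℤ) n).filter (fun t => ¬(t + h.1 ∈ Finset.Icc (1:ℤ) n ∧
        t + h.2.1 ∈ Finset.Icc (1:ℤ) n ∧ t + h.2.2 ∈ Finset.Icc (1:ℤ) n))).card ≤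
        h.1.natAbs + h.2.1.natAbs + h.2.2.natAbs := by
      calc _ ≤ _ := Finset.card_le_card hsub
        _ ≤ _ := by
          refine (Finset.card_union_le _ _).trans ?_
          have := Finset.card_union_le
            ((Finset.Icc (1:ℤ) n).filter (fun t => t + h.1 ∉ Finset.Icc (1:ℤ) n))
            ((Finset.Icc (1:ℤ) n).filter (fun t => t + h.2.1 ∉ Finset.Icc (1:ℤ) n))
          have h1 := count_single n h.1
          have h2 := count_single n h.2.1
          have h3 := count_single n h.2.2
          omega
    have heq : (Tset n h).card + ((Finset.Icc (1:ℤ) n).filter (fun t => ¬(t + h.1 ∈ Finset.Icc (1:ℤ) n ∧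
        t + h.2.1 ∈ Finset.Icc (1:ℤ) n ∧ t + h.2.2 ∈ Finset.Icc (1:ℤ) n))).card = n := by
      rw [Tset, hsplit, hIcc]
    omega
  rw [abs_sub_comm]
  rw [_root_.abs_of_nonneg (sub_nonneg.mpr (by exact_mod_cast hle))]
  have hstep : ((n:ℝ)) - (Tset n h).card ≤ ((h.1.natAbs + h.2.1.natAbs + h.2.2.natAbs : ℕ) : ℝ) := by
    have : ((n - (Tset n h).card : ℕ) : ℝ) ≤ ((h.1.natAbs + h.2.1.natAbs + h.2.2.natAbs : ℕ) : ℝ) := by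
      exact_mod_cast hcompl
    rw [Nat.cast_sub hle] at this
    exact this
  refine hstep.trans (le_of_eq ?_)
  push_cast [Nat.cast_natAbs]
  ring

lemma reindex (n : ℕ) (f : ℤ × ℤ × ℤ → ℂ) (g : ℤ → ℤ → ℤ → ℤ → ℂ)
    (hg : ∀ t1 t2 t3 t4, g t1 t2 t3 t4 = f (t1 - t4, t2 - t4, t3 - t4)) :
    (∑ t1 ∈ Finset.Icc (1:ℤ) n, ∑ t2 ∈ Finset.Icc (1:ℤ) n, ∑ t3 ∈ Finset.Icc (1:ℤ) n,
      ∑ t4 ∈ Finset.Icc (1:ℤ) n, g t1 t2 t3 t4)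
    = ∑ h ∈ (Finset.Icc (1-(n:ℤ)) ((n:ℤ)-1)) ×ˢ
        ((Finset.Icc (1-(n:ℤ)) ((n:ℤ)-1)) ×ˢ (Finset.Icc (1-(n:ℤ)) ((n:ℤ)-1))),
        ((Tset n h).card : ℂ) * f h := by
  classical
  have l1 : (∑ p ∈ (Finset.Icc (1:ℤ) n) ×ˢ ((Finset.Icc (1:ℤ) n) ×ˢ
      ((Finset.Icc (1:ℤ) n) ×ˢ (Finset.Icc (1:ℤ) n))), g p.1 p.2.1 p.2.2.1 p.2.2.2)
      = ∑ t1 ∈ Finset.Icc (1:ℤ) n, ∑ t2 ∈ Finset.Icc (1:ℤ) n, ∑ t3 ∈ Finset.Icc (1:ℤ) n,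
        ∑ t4 ∈ Finset.Icc (1:ℤ) n, g t1 t2 t3 t4 := by
    rw [Finset.sum_product]
    refine Finset.sum_congr rfl fun t1 _ => ?_
    rw [Finset.sum_product]
    refine Finset.sum_congr rfl fun t2 _ => ?_
    rw [Finset.sum_product]
  have l2 : (∑ q ∈ ((Finset.Icc (1-(n:ℤ)) ((n:ℤ)-1)) ×ˢ
      ((Finset.Icc (1-(n:ℤ)) ((n:ℤ)-1)) ×ˢ (Finset.Icc (1-(n:ℤ)) ((n:ℤ)-1)))).sigma (Tset n),
      f q.1)
      = ∑ h ∈ (Finset.Icc (1-(n:ℤ)) ((n:ℤ)-1)) ×ˢ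
        ((Finset.Icc (1-(n:ℤ)) ((n:ℤ)-1)) ×ˢ (Finset.Icc (1-(n:ℤ)) ((n:ℤ)-1))),
        ((Tset n h).card : ℂ) * f h := by
    rw [Finset.sum_sigma]
    refine Finset.sum_congr rfl fun h _ => ?_
    simp [Finset.sum_const, nsmul_eq_mul]
  rw [← l1, ← l2]
  refine Finset.sum_nbij'
    (i := fun p => ⟨(p.1 - p.2.2.2, p.2.1 - p.2.2.2, p.2.2.1 - p.2.2.2), p.2.2.2⟩)
    (j := fun q => (q.2 + q.1.1, q.2 + q.1.2.1, q.2 + q.1.2.2, q.2))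
    ?_ ?_ ?_ ?_ ?_
  · intro p hp
    simp only [Finset.mem_product, Finset.mem_Icc, Finset.mem_sigma, Tset,
      Finset.mem_filter] at *
    refine ⟨⟨?_, ?_, ?_⟩, ?_⟩ <;> omega
  · intro q hq
    simp only [Finset.mem_product, Finset.mem_Icc, Finset.mem_sigma, Tset,
      Finset.mem_filter] at *
    omega
  · intro p hp
    obtain ⟨t1, t2, t3, t4⟩ := p
    simp
  · intro q hq
    obtain ⟨⟨h1, h2, h3⟩, t⟩ := q
    simp
  · intro p hp
    rw [hg]

/-- if `Σ (1+|h1|+|h2|+|h3|)|c(h1,h2,h3)| < ∞`, then there is a constant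
`C > 0` such that for all `n` and all Fourier frequencies `λ_{j,n} = 2πj/n`,
`λ_{k,n} = 2πk/n`,
`|(1/(4π²n²)) Σ_{t1,t2,t3,t4=1}^{n} c(t1−t4,t2−t4,t3−t4)
    e^{−i(t1−t2)λ_{j,n} + i(t3−t4)λ_{k,n}} − (2π/n) F(λ_{j,n},−λ_{j,n},−λ_{k,n})| ≤ C/n²`. -/
theorem cumulant_sum_approx (c : ℤ × ℤ × ℤ → ℂ)
    (hc : Summable fun h : ℤ × ℤ × ℤ =>
      (1 + |h.1| + |h.2.1| + |h.2.2| : ℝ) * ‖c h‖) :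
    ∃ C > (0 : ℝ), ∀ n : ℕ, 0 < n → ∀ j k : ℤ,
      ‖(1 / (4 * (π : ℂ) ^ 2 * (n : ℂ) ^ 2)) *
          (∑ t1 ∈ Finset.Icc (1 : ℤ) n, ∑ t2 ∈ Finset.Icc (1 : ℤ) n,
            ∑ t3 ∈ Finset.Icc (1 : ℤ) n, ∑ t4 ∈ Finset.Icc (1 : ℤ) n,
              c (t1 - t4, t2 - t4, t3 - t4) *
                Complex.exp (-Complex.I * ((t1 : ℂ) - (t2 : ℂ)) * ((2 * π * j / n : ℝ) : ℂ) +
                  Complex.I * ((t3 : ℂ) - (t4 : ℂ)) * ((2 * π * k / n : ℝ) : ℂ))) -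
        (2 * (π : ℂ) / (n : ℂ)) *
          cumSpecDens c (2 * π * j / n) (-(2 * π * j / n)) (-(2 * π * k / n))‖
        ≤ C / (n : ℝ) ^ 2 := by
  classical
  have hc' : Summable fun h : ℤ × ℤ × ℤ =>
      (1 + |(h.1:ℝ)| + |(h.2.1:ℝ)| + |(h.2.2:ℝ)|) * ‖c h‖ := by
    have := hc
    simp only [Int.cast_abs] at this
    exact this
  set C' := ∑' h : ℤ × ℤ × ℤ, (1 + |(h.1:ℝ)| + |(h.2.1:ℝ)| + |(h.2.2:ℝ)|) * ‖c h‖ with hC'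
  have hC'nn : 0 ≤ C' :=
    tsum_nonneg fun h => mul_nonneg (by positivity) (norm_nonneg _)
  refine ⟨C' / (4 * π ^ 2) + 1, by positivity, ?_⟩
  intro n hn j k
  have hn0 : (n:ℂ) ≠ 0 := Nat.cast_ne_zero.mpr hn.ne'
  have hnR : (0:ℝ) < (n:ℝ) := by exact_mod_cast hn
  have hπ : (π:ℂ) ≠ 0 := Complex.ofReal_ne_zero.mpr Real.pi_ne_zero
  set L : ℝ := 2 * π * (j:ℝ) / (n:ℝ) with hL
  set K : ℝ := 2 * π * (k:ℝ) / (n:ℝ) with hK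
  set f : ℤ × ℤ × ℤ → ℂ := fun h =>
    c h * Complex.exp (-Complex.I * ((h.1:ℂ) - (h.2.1:ℂ)) * (L:ℂ) +
      Complex.I * (h.2.2:ℂ) * (K:ℂ)) with hf
  have hfn : ∀ h, ‖f h‖ = ‖c h‖ := by
    intro h
    rw [hf]
    simp only
    rw [norm_mul]
    have harg : (-Complex.I * ((h.1:ℂ) - (h.2.1:ℂ)) * (L:ℂ) +
        Complex.I * (h.2.2:ℂ) * (K:ℂ))
        = ((((h.2.2:ℝ) * K - ((h.1:ℝ) - (h.2.1:ℝ)) * L : ℝ)):ℂ) * Complex.I := by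
      push_cast; ring
    rw [harg, Complex.norm_exp_ofReal_mul_I, mul_one]
  have hwle : ∀ h : ℤ × ℤ × ℤ, ‖f h‖ ≤ (1 + |(h.1:ℝ)| + |(h.2.1:ℝ)| + |(h.2.2:ℝ)|) * ‖c h‖ := by
    intro h
    rw [hfn]
    refine le_mul_of_one_le_left (norm_nonneg _) ?_
    have a1 := abs_nonneg ((h.1:ℝ)); have a2 := abs_nonneg ((h.2.1:ℝ))
    have a3 := abs_nonneg ((h.2.2:ℝ)); linarith
  have hsf : Summable f := Summable.of_norm_bounded hc' hwle
  -- reindex the quadruple sum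
  have key : (∑ t1 ∈ Finset.Icc (1 : ℤ) n, ∑ t2 ∈ Finset.Icc (1 : ℤ) n,
      ∑ t3 ∈ Finset.Icc (1 : ℤ) n, ∑ t4 ∈ Finset.Icc (1 : ℤ) n,
        c (t1 - t4, t2 - t4, t3 - t4) *
          Complex.exp (-Complex.I * ((t1 : ℂ) - (t2 : ℂ)) * (L : ℂ) +
            Complex.I * ((t3 : ℂ) - (t4 : ℂ)) * (K : ℂ)))
      = ∑ h ∈ (Finset.Icc (1-(n:ℤ)) ((n:ℤ)-1)) ×ˢ
        ((Finset.Icc (1-(n:ℤ)) ((n:ℤ)-1)) ×ˢ (Finset.Icc (1-(n:ℤ)) ((n:ℤ)-1))),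
        ((Tset n h).card : ℂ) * f h := by
    refine reindex n f _ ?_
    intro t1 t2 t3 t4
    rw [hf]
    simp only
    congr 1
    push_cast
    ring
  have hTout : ∀ h ∉ (Finset.Icc (1-(n:ℤ)) ((n:ℤ)-1)) ×ˢ
      ((Finset.Icc (1-(n:ℤ)) ((n:ℤ)-1)) ×ˢ (Finset.Icc (1-(n:ℤ)) ((n:ℤ)-1))),
      ((Tset n h).card : ℂ) * f h = 0 := by
    intro h hB
    obtain ⟨h1, h2, h3⟩ := h
    have : Tset n (h1, h2, h3) = ∅ := by
      rw [Tset, Finset.filter_eq_empty_iff]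
      intro t ht
      simp only [Finset.mem_product, Finset.mem_Icc] at hB
      simp only [Finset.mem_Icc] at ht
      simp only [Finset.mem_Icc]
      omega
    rw [this]
    simp
  have hsum1 : Summable (fun h => ((Tset n h).card : ℂ) * f h) :=
    summable_of_ne_finset_zero hTout
  have hsum2 : Summable (fun h => (n:ℂ) * f h) := hsf.mul_left _
  have e1 : (∑ h ∈ (Finset.Icc (1-(n:ℤ)) ((n:ℤ)-1)) ×ˢ
      ((Finset.Icc (1-(n:ℤ)) ((n:ℤ)-1)) ×ˢ (Finset.Icc (1-(n:ℤ)) ((n:ℤ)-1))),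
      ((Tset n h).card : ℂ) * f h) = ∑' h, ((Tset n h).card : ℂ) * f h :=
    (tsum_eq_sum hTout).symm
  have hFeq : cumSpecDens c L (-L) (-K) = ((2 * (π:ℝ) : ℂ) ^ 3)⁻¹ * ∑' h, f h := by
    rw [cumSpecDens]
    congr 1
    refine tsum_congr fun h => ?_
    rw [hf]
    simp only
    congr 1
    push_cast
    ring
  have e2 : (2 * (π:ℂ) / (n:ℂ)) * cumSpecDens c L (-L) (-K)
      = (1 / (4 * (π : ℂ) ^ 2 * (n : ℂ) ^ 2)) * ∑' h, (n:ℂ) * f h := by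
    rw [hFeq, tsum_mul_left]
    field_simp
    ring
  rw [key, e1, e2, ← mul_sub, ← Summable.tsum_sub hsum1 hsum2, norm_mul]
  have hnorm1 : ‖(1 / (4 * (π : ℂ) ^ 2 * (n : ℂ) ^ 2))‖ = 1 / (4 * π ^ 2 * (n:ℝ) ^ 2) := by
    have : (1 / (4 * (π : ℂ) ^ 2 * (n : ℂ) ^ 2)) = (((1 / (4 * π ^ 2 * (n:ℝ) ^ 2) : ℝ)) : ℂ) := by
      push_cast; ring
    rw [this, Complex.norm_real, Real.norm_eq_abs, _root_.abs_of_nonneg (by positivity)]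
  have hb : ∀ h : ℤ × ℤ × ℤ, ‖((Tset n h).card : ℂ) * f h - (n:ℂ) * f h‖
      ≤ (1 + |(h.1:ℝ)| + |(h.2.1:ℝ)| + |(h.2.2:ℝ)|) * ‖c h‖ := by
    intro h
    rw [← sub_mul, norm_mul, hfn]
    have hcast : (((Tset n h).card : ℂ) - (n:ℂ)) = ((((Tset n h).card : ℝ) - (n:ℝ) : ℝ) : ℂ) := by
      push_cast; ring
    rw [hcast, Complex.norm_real, Real.norm_eq_abs]
    refine (mul_le_mul_of_nonneg_right (N_bound n h) (norm_nonneg _)).trans ?_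
    refine mul_le_mul_of_nonneg_right (by linarith) (norm_nonneg _)
  have hsnorm : Summable (fun h : ℤ × ℤ × ℤ => ‖((Tset n h).card : ℂ) * f h - (n:ℂ) * f h‖) :=
    Summable.of_nonneg_of_le (fun h => norm_nonneg _) hb hc'
  have htsum : ‖∑' h, (((Tset n h).card : ℂ) * f h - (n:ℂ) * f h)‖ ≤ C' := by
    refine (norm_tsum_le_tsum_norm hsnorm).trans ?_
    rw [hC']
    exact Summable.tsum_le_tsum hb hsnorm hc'
  rw [hnorm1]
  calc 1 / (4 * π ^ 2 * (n:ℝ) ^ 2) * ‖∑' h, (((Tset n h).card : ℂ) * f h - (n:ℂ) * f h)‖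
      ≤ 1 / (4 * π ^ 2 * (n:ℝ) ^ 2) * C' :=
        mul_le_mul_of_nonneg_left htsum (by positivity)
    _ = (C' / (4 * π ^ 2)) / (n:ℝ) ^ 2 := by ring
    _ ≤ (C' / (4 * π ^ 2) + 1) / (n:ℝ) ^ 2 := by
        gcongr <;> linarith
end

section
/- For the bivariate moving average process X(t) = e(t) + B e(t−1) with B = [[1,1],[1,−1]], where (e_1(t)) and (e_2(t)) are independent univariate i.i.d. sequences with E(e_j(t)) = 0, E(e_j(t)²) = 1 and E(e_j(t)⁴) = η_j, one has ρ_12(0) = 0, and the limiting variance of √n(ρ̂_12(0) − ρ_12(0)) simplifies to τ² = ρ_11(0)ρ_22(0) + 2ρ_11(1)ρ_22(1) + 2ρ_12(1)ρ_21(1) + Σ_{j∈ℤ} c_{1212}(j,j,0)/(γ_11(0)γ_22(0)) = 1 + (η_1 − 3)/9 + (η_2 − 3)/9. -/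
open MeasureTheory ProbabilityTheory Complex Finset Filter
open scoped Real
open scoped ENNReal

noncomputable section



namespace MA1Aux
set_option linter.unusedSectionVars false

variable {Ω : Type*} [MeasurableSpace Ω] {P : Measure Ω} [IsProbabilityMeasure P]
  {e : ℤ → Ω → Fin 2 → ℝ} {η : Fin 2 → ℝ}

variable (hmeas : ∀ t j, Measurable fun ω => e t ω j)
  (hindep : iIndepFun (fun (p : ℤ × Fin 2) ω => e p.1 ω p.2) P)
  (hmean : ∀ t j, (∫ ω, e t ω j ∂P) = 0)
  (hvar : ∀ t j, (∫ ω, e t ω j ^ 2 ∂P) = 1)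
  (hkurt : ∀ t j, (∫ ω, e t ω j ^ 4 ∂P) = η j)

include hmeas hindep hmean hvar hkurt in
lemma mom2 (u v : ℤ × Fin 2) :
    ∫ ω, e u.1 ω u.2 * e v.1 ω v.2 ∂P = if u = v then 1 else 0 := by
  by_cases h : u = v
  · subst h
    rw [if_pos rfl, show (∫ ω, e u.1 ω u.2 * e u.1 ω u.2 ∂P) = ∫ ω, e u.1 ω u.2 ^ 2 ∂P from
      integral_congr_ae (.of_forall fun ω => by ring), hvar]
  · rw [if_neg h]
    calc ∫ ω, e u.1 ω u.2 * e v.1 ω v.2 ∂P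
        = (∫ ω, e u.1 ω u.2 ∂P) * ∫ ω, e v.1 ω v.2 ∂P :=
          (hindep.indepFun h).integral_fun_mul_eq_mul_integral (hmeas u.1 u.2).aestronglyMeasurable
            (hmeas v.1 v.2).aestronglyMeasurable
      _ = 0 := by rw [hmean, hmean, mul_zero]

include hmeas hindep hmean hvar hkurt in
lemma mom22 (u v : ℤ × Fin 2) (h : u ≠ v) :
    ∫ ω, e u.1 ω u.2 ^ 2 * e v.1 ω v.2 ^ 2 ∂P = 1 := by
  have hsq : Measurable fun x : ℝ => x ^ 2 := by fun_prop
  calc ∫ ω, e u.1 ω u.2 ^ 2 * e v.1 ω v.2 ^ 2 ∂P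
      = (∫ ω, e u.1 ω u.2 ^ 2 ∂P) * ∫ ω, e v.1 ω v.2 ^ 2 ∂P :=
        ((hindep.indepFun h).comp hsq hsq).integral_fun_mul_eq_mul_integral
          (hsq.comp (hmeas u.1 u.2)).aestronglyMeasurable
          (hsq.comp (hmeas v.1 v.2)).aestronglyMeasurable
    _ = 1 := by rw [hvar, hvar, mul_one]

include hmeas hindep hmean hvar hkurt in
lemma isolate (a b d c : ℤ × Fin 2) (h1 : c ≠ a) (h2 : c ≠ b) (h3 : c ≠ d) :
    ∫ ω, e a.1 ω a.2 * e b.1 ω b.2 * e d.1 ω d.2 * e c.1 ω c.2 ∂P = 0 := by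
  classical
  have hfm : ∀ p : ℤ × Fin 2, Measurable fun ω => e p.1 ω p.2 := fun p => hmeas p.1 p.2
  have hdisj : Disjoint ({a, b, d} : Finset (ℤ × Fin 2)) {c} := by
    simp [Finset.disjoint_singleton_right, h1, h2, h3]
  have hind := hindep.indepFun_finset {a, b, d} {c} hdisj hfm
  have ha : a ∈ ({a, b, d} : Finset (ℤ × Fin 2)) := by simp
  have hb : b ∈ ({a, b, d} : Finset (ℤ × Fin 2)) := by simp
  have hd : d ∈ ({a, b, d} : Finset (ℤ × Fin 2)) := by simp
  have hcm : c ∈ ({c} : Finset (ℤ × Fin 2)) := by simp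
  have hφ : Measurable fun v : (({a, b, d} : Finset (ℤ × Fin 2)) → ℝ) =>
      v ⟨a, ha⟩ * v ⟨b, hb⟩ * v ⟨d, hd⟩ := by fun_prop
  have hψ : Measurable fun v : (({c} : Finset (ℤ × Fin 2)) → ℝ) => v ⟨c, hcm⟩ := by fun_prop
  have hind2 := hind.comp hφ hψ
  calc ∫ ω, e a.1 ω a.2 * e b.1 ω b.2 * e d.1 ω d.2 * e c.1 ω c.2 ∂P
      = (∫ ω, e a.1 ω a.2 * e b.1 ω b.2 * e d.1 ω d.2 ∂P) * ∫ ω, e c.1 ω c.2 ∂P :=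
        hind2.integral_fun_mul_eq_mul_integral
          (((hfm a).mul (hfm b)).mul (hfm d)).aestronglyMeasurable
          (hfm c).aestronglyMeasurable
    _ = 0 := by rw [hmean, mul_zero]


include hmeas hindep hmean hvar hkurt in
lemma mom4 (u v w x : ℤ × Fin 2) :
    ∫ ω, e u.1 ω u.2 * e v.1 ω v.2 * (e w.1 ω w.2 * e x.1 ω x.2) ∂P =
      (if u = v then (1:ℝ) else 0) * (if w = x then 1 else 0)
      + (if u = w then (1:ℝ) else 0) * (if v = x then 1 else 0)
      + (if u = x then (1:ℝ) else 0) * (if v = w then 1 else 0)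
      + (if u = v ∧ v = w ∧ w = x then η u.2 - 3 else 0) := by
  rcases eq_or_ne u v with rfl | huv
  · rcases eq_or_ne u w with rfl | huw
    · rcases eq_or_ne u x with rfl | hux
      · rw [show (∫ ω, e u.1 ω u.2 * e u.1 ω u.2 * (e u.1 ω u.2 * e u.1 ω u.2) ∂P)
            = ∫ ω, e u.1 ω u.2 ^ 4 ∂P from integral_congr_ae (.of_forall fun ω => by ring),
          hkurt]
        simp; ring
      · rw [show (∫ ω, e u.1 ω u.2 * e u.1 ω u.2 * (e u.1 ω u.2 * e x.1 ω x.2) ∂P)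
            = ∫ ω, e u.1 ω u.2 * e u.1 ω u.2 * e u.1 ω u.2 * e x.1 ω x.2 ∂P from
            integral_congr_ae (.of_forall fun ω => by ring),
          isolate hmeas hindep hmean hvar hkurt u u u x hux.symm hux.symm hux.symm]
        simp [hux]
    · rcases eq_or_ne u x with rfl | hux
      · rw [show (∫ ω, e u.1 ω u.2 * e u.1 ω u.2 * (e w.1 ω w.2 * e u.1 ω u.2) ∂P)
            = ∫ ω, e u.1 ω u.2 * e u.1 ω u.2 * e u.1 ω u.2 * e w.1 ω w.2 ∂P from
            integral_congr_ae (.of_forall fun ω => by ring),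
          isolate hmeas hindep hmean hvar hkurt u u u w huw.symm huw.symm huw.symm]
        simp [huw, Ne.symm huw]
      · rcases eq_or_ne w x with rfl | hwx
        · rw [show (∫ ω, e u.1 ω u.2 * e u.1 ω u.2 * (e w.1 ω w.2 * e w.1 ω w.2) ∂P)
              = ∫ ω, e u.1 ω u.2 ^ 2 * e w.1 ω w.2 ^ 2 ∂P from
              integral_congr_ae (.of_forall fun ω => by ring),
            mom22 hmeas hindep hmean hvar hkurt u w huw]
          simp [huw]
        · rw [show (∫ ω, e u.1 ω u.2 * e u.1 ω u.2 * (e w.1 ω w.2 * e x.1 ω x.2) ∂P)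
              = ∫ ω, e u.1 ω u.2 * e u.1 ω u.2 * e x.1 ω x.2 * e w.1 ω w.2 ∂P from
              integral_congr_ae (.of_forall fun ω => by ring),
            isolate hmeas hindep hmean hvar hkurt u u x w (Ne.symm huw) (Ne.symm huw) hwx]
          simp [huw, hux, hwx]
  · rcases eq_or_ne u w with rfl | huw
    · rcases eq_or_ne v x with rfl | hvx
      · rw [show (∫ ω, e u.1 ω u.2 * e v.1 ω v.2 * (e u.1 ω u.2 * e v.1 ω v.2) ∂P)
            = ∫ ω, e u.1 ω u.2 ^ 2 * e v.1 ω v.2 ^ 2 ∂P from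
            integral_congr_ae (.of_forall fun ω => by ring),
          mom22 hmeas hindep hmean hvar hkurt u v huv]
        simp [huv]
      · rw [show (∫ ω, e u.1 ω u.2 * e v.1 ω v.2 * (e u.1 ω u.2 * e x.1 ω x.2) ∂P)
            = ∫ ω, e u.1 ω u.2 * e u.1 ω u.2 * e x.1 ω x.2 * e v.1 ω v.2 ∂P from
            integral_congr_ae (.of_forall fun ω => by ring),
          isolate hmeas hindep hmean hvar hkurt u u x v huv.symm huv.symm hvx]
        simp [huv, hvx, Ne.symm huv]
    · rcases eq_or_ne u x with rfl | hux
      · rcases eq_or_ne v w with rfl | hvw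
        · rw [show (∫ ω, e u.1 ω u.2 * e v.1 ω v.2 * (e v.1 ω v.2 * e u.1 ω u.2) ∂P)
              = ∫ ω, e u.1 ω u.2 ^ 2 * e v.1 ω v.2 ^ 2 ∂P from
              integral_congr_ae (.of_forall fun ω => by ring),
            mom22 hmeas hindep hmean hvar hkurt u v huv]
          simp [huv]
        · rw [show (∫ ω, e u.1 ω u.2 * e v.1 ω v.2 * (e w.1 ω w.2 * e u.1 ω u.2) ∂P)
              = ∫ ω, e u.1 ω u.2 * e w.1 ω w.2 * e u.1 ω u.2 * e v.1 ω v.2 ∂P from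
              integral_congr_ae (.of_forall fun ω => by ring),
            isolate hmeas hindep hmean hvar hkurt u w u v (Ne.symm huv) hvw (Ne.symm huv)]
          simp [huv, huw, hvw, Ne.symm huv, Ne.symm hvw]
      · rw [show (∫ ω, e u.1 ω u.2 * e v.1 ω v.2 * (e w.1 ω w.2 * e x.1 ω x.2) ∂P)
              = ∫ ω, e v.1 ω v.2 * e w.1 ω w.2 * e x.1 ω x.2 * e u.1 ω u.2 ∂P from
              integral_congr_ae (.of_forall fun ω => by ring),
            isolate hmeas hindep hmean hvar hkurt v w x u huv huw hux]
        simp [huv, huw, hux]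

end MA1Aux
namespace MA1Aux2

lemma integral_expand {Ω : Type*} [MeasurableSpace Ω] {P : Measure Ω} {n m : ℕ}
    (a : Fin n → ℝ) (b : Fin m → ℝ) (f : Fin n → Ω → ℝ) (g : Fin m → Ω → ℝ)
    (hInt : ∀ i j, Integrable (fun ω => f i ω * g j ω) P) :
    ∫ ω, (∑ i, a i * f i ω) * (∑ j, b j * g j ω) ∂P
      = ∑ i, ∑ j, a i * b j * ∫ ω, f i ω * g j ω ∂P := by
  have h1 : ∀ ω : Ω, (∑ i, a i * f i ω) * (∑ j, b j * g j ω)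
      = ∑ i, ∑ j, a i * b j * (f i ω * g j ω) := by
    intro ω
    rw [Finset.sum_mul_sum]
    exact Finset.sum_congr rfl fun i _ => Finset.sum_congr rfl fun j _ => by ring
  simp_rw [h1]
  rw [integral_finset_sum _ fun i _ =>
    integrable_finset_sum _ fun j _ => ((hInt i j).const_mul _)]
  refine Finset.sum_congr rfl fun i _ => ?_
  rw [integral_finset_sum _ fun j _ => (hInt i j).const_mul _]
  exact Finset.sum_congr rfl fun j _ => MeasureTheory.integral_const_mul _ _

variable {Ω : Type*} [MeasurableSpace Ω] {P : Measure Ω} [IsProbabilityMeasure P]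
  {e : ℤ → Ω → Fin 2 → ℝ}

lemma pair_memLp (hmom : ∀ t j, MemLp (fun ω => e t ω j) 4 P) (p q : ℤ × Fin 2) :
    MemLp (fun ω => e p.1 ω p.2 * e q.1 ω q.2) 2 P := by
  haveI : ENNReal.HolderTriple 4 4 2 := ⟨by
        rw [← two_mul, show (4:ℝ≥0∞) = 2*2 by norm_num,
          ENNReal.mul_inv (by norm_num) (by norm_num), ← mul_assoc,
          ENNReal.mul_inv_cancel (by norm_num) (by norm_num), one_mul]⟩
  have := MemLp.smul (μ := P) (p := 4) (q := 4) (r := 2) (hmom q.1 q.2) (hmom p.1 p.2)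
  exact this

lemma pair_integrable (hmom : ∀ t j, MemLp (fun ω => e t ω j) 4 P) (p q : ℤ × Fin 2) :
    Integrable (fun ω => e p.1 ω p.2 * e q.1 ω q.2) P :=
  (pair_memLp hmom p q).integrable (by norm_num)

lemma quad_integrable (hmom : ∀ t j, MemLp (fun ω => e t ω j) 4 P) (p q r s : ℤ × Fin 2) :
    Integrable (fun ω => e p.1 ω p.2 * e q.1 ω q.2 * (e r.1 ω r.2 * e s.1 ω s.2)) P := by
  haveI : ENNReal.HolderTriple 2 2 1 := ⟨by
        rw [← two_mul, ENNReal.mul_inv_cancel (by norm_num) (by norm_num), inv_one]⟩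
  have := MemLp.smul (μ := P) (p := 2) (q := 2) (r := 1)
    (pair_memLp hmom r s) (pair_memLp hmom p q)
  exact this.integrable le_rfl

end MA1Aux2


namespace MA1Aux3
def qidx (t : ℤ) : Fin 7 → (ℤ × Fin 2) × (ℤ × Fin 2)
  | 0 => ((t,0),(t,1))
  | 1 => ((t,0),(t-1,0))
  | 2 => ((t,0),(t-1,1))
  | 3 => ((t-1,0),(t,1))
  | 4 => ((t-1,1),(t,1))
  | 5 => ((t-1,0),(t-1,0))
  | 6 => ((t-1,1),(t-1,1))

def qsgn : Fin 7 → ℝ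
  | 0 => 1
  | 1 => 1
  | 2 => -1
  | 3 => 1
  | 4 => 1
  | 5 => 1
  | 6 => -1

def lidx (t : ℤ) (r : Fin 2) : Fin 3 → ℤ × Fin 2
  | 0 => (t, r)
  | 1 => (t-1, 0)
  | 2 => (t-1, 1)

def lsgn (r : Fin 2) : Fin 3 → ℝ
  | 0 => 1
  | 1 => 1
  | 2 => if r = 0 then 1 else -1

end MA1Aux3

set_option maxHeartbeats 1600000 in
/-- for the bivariate moving average process
`X(t) = e(t) + B e(t−1)` with `B = [[1,1],[1,−1]]` and independent i.i.d. innovation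
sequences `(e_1(t))`, `(e_2(t))` with mean `0`, variance `1` and kurtosis `η_j`, one has
`ρ_12(0) = 0` and the limiting variance `τ²` of `√n(ρ̂_12(0) − ρ_12(0))` simplifies to
`ρ_11(0)ρ_22(0) + 2ρ_11(1)ρ_22(1) + 2ρ_12(1)ρ_21(1) + Σ_j c_1212(j,j,0)/(γ_11(0)γ_22(0))
 = 1 + (η_1 − 3)/9 + (η_2 − 3)/9`. -/
theorem ma1_crosscorrelation_limit_variance
    {Ω : Type*} [MeasurableSpace Ω] (P : Measure Ω) [IsProbabilityMeasure P]
    (e : ℤ → Ω → Fin 2 → ℝ)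
    (hmeas : ∀ t j, Measurable fun ω => e t ω j)
    (hmom : ∀ t j, MemLp (fun ω => e t ω j) 4 P)
    -- (e_j(t))_{t,j} are mutually independent
    (hindep : iIndepFun
      (fun (p : ℤ × Fin 2) ω => e p.1 ω p.2) P)
    -- each sequence (e_j(t))_t is identically distributed
    (hident : ∀ t j, Measure.map (fun ω => e t ω j) P = Measure.map (fun ω => e 0 ω j) P)
    (η : Fin 2 → ℝ)
    (hmean : ∀ t j, (∫ ω, e t ω j ∂P) = 0)
    (hvar : ∀ t j, (∫ ω, e t ω j ^ 2 ∂P) = 1)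
    (hkurt : ∀ t j, (∫ ω, e t ω j ^ 4 ∂P) = η j)
    -- the process X(t) = e(t) + B e(t−1), B = [[1,1],[1,−1]]
    (X : ℤ → Ω → Fin 2 → ℝ)
    (hX : ∀ t ω, X t ω = ![e t ω 0 + e (t - 1) ω 0 + e (t - 1) ω 1,
      e t ω 1 + e (t - 1) ω 0 - e (t - 1) ω 1])
    -- autocovariances, cross-correlations and fourth-order cumulants of X
    (γ : Fin 2 → Fin 2 → ℤ → ℝ)
    (hγ : ∀ r s h, γ r s h = ∫ ω, X h ω r * X 0 ω s ∂P)
    (ρ : Fin 2 → Fin 2 → ℤ → ℝ)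
    (hρ : ∀ r s h, ρ r s h = γ r s h / Real.sqrt (γ r r 0 * γ s s 0))
    (c : Fin 2 → Fin 2 → Fin 2 → Fin 2 → ℤ → ℤ → ℤ → ℝ)
    (hc : ∀ p q r s h1 h2 h3, c p q r s h1 h2 h3 =
      (∫ ω, X h1 ω p * X h2 ω q * X h3 ω r * X 0 ω s ∂P)
        - γ p q (h1 - h2) * γ r s h3 - γ p r (h1 - h3) * γ q s h2
        - γ p s h1 * γ q r (h2 - h3))
    -- τ², the limiting variance of √n(ρ̂_12(0) − ρ_12(0)) (general formula of
    -- Example 2.2 with r = 1, s = 2, h = 0)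
    (τsq : ℝ)
    (hτ : τsq = ∑' j : ℤ,
      (ρ 0 0 j * ρ 1 1 j + ρ 0 1 j * ρ 1 0 j +
        c 0 1 0 1 j j 0 / (γ 0 0 0 * γ 1 1 0) +
        (1 / 2) * ρ 0 1 0 ^ 2 * (ρ 0 0 j ^ 2 + ρ 1 1 j ^ 2 + 2 * ρ 0 1 j ^ 2) -
        2 * ρ 0 1 0 * (ρ 0 0 j * ρ 1 0 j + ρ 0 1 j * ρ 1 1 j) +
        (1 / 4) * ρ 0 1 0 ^ 2 * (c 0 0 0 0 j j 0 / γ 0 0 0 ^ 2 +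
          c 1 1 1 1 j j 0 / γ 1 1 0 ^ 2 + 2 * c 0 0 1 1 j j 0 / (γ 0 0 0 * γ 1 1 0)) -
        (ρ 0 1 0 / Real.sqrt (γ 0 0 0 * γ 1 1 0)) *
          (c 0 1 0 0 j j 0 / γ 0 0 0 + c 0 1 1 1 j j 0 / γ 1 1 0))) :
    ρ 0 1 0 = 0 ∧
    τsq = ρ 0 0 0 * ρ 1 1 0 + 2 * ρ 0 0 1 * ρ 1 1 1 + 2 * ρ 0 1 1 * ρ 1 0 1 +
      ∑' j : ℤ, c 0 1 0 1 j j 0 / (γ 0 0 0 * γ 1 1 0) ∧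
    ρ 0 0 0 * ρ 1 1 0 + 2 * ρ 0 0 1 * ρ 1 1 1 + 2 * ρ 0 1 1 * ρ 1 0 1 +
      (∑' j : ℤ, c 0 1 0 1 j j 0 / (γ 0 0 0 * γ 1 1 0)) =
      1 + (η 0 - 3) / 9 + (η 1 - 3) / 9 := by
  classical
  -- second-moment expansion
  have expand2 : ∀ (u v : Fin 3 → ℤ × Fin 2) (a b : Fin 3 → ℝ),
      (∫ ω, (∑ i, a i * e (u i).1 ω (u i).2) * (∑ j, b j * e (v j).1 ω (v j).2) ∂P)
      = ∑ i, ∑ j, a i * b j * (if u i = v j then (1:ℝ) else 0) := by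
    intro u v a b
    rw [MA1Aux2.integral_expand a b _ _
      (fun i j => MA1Aux2.pair_integrable hmom (u i) (v j))]
    exact Finset.sum_congr rfl fun i _ => Finset.sum_congr rfl fun j _ => by
      rw [MA1Aux.mom2 hmeas hindep hmean hvar hkurt (u i) (v j)]
  -- fourth-moment expansion
  have expand4 : ∀ (u v : Fin 7 → (ℤ × Fin 2) × (ℤ × Fin 2)) (a b : Fin 7 → ℝ),
      (∫ ω, (∑ i, a i * (e (u i).1.1 ω (u i).1.2 * e (u i).2.1 ω (u i).2.2)) *
            (∑ j, b j * (e (v j).1.1 ω (v j).1.2 * e (v j).2.1 ω (v j).2.2)) ∂P)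
      = ∑ i, ∑ j, a i * b j *
          ((if (u i).1 = (u i).2 then (1:ℝ) else 0) * (if (v j).1 = (v j).2 then 1 else 0)
          + (if (u i).1 = (v j).1 then (1:ℝ) else 0) * (if (u i).2 = (v j).2 then 1 else 0)
          + (if (u i).1 = (v j).2 then (1:ℝ) else 0) * (if (u i).2 = (v j).1 then 1 else 0)
          + (if (u i).1 = (u i).2 ∧ (u i).2 = (v j).1 ∧ (v j).1 = (v j).2
              then η (u i).1.2 - 3 else 0)) := by
    intro u v a b
    rw [MA1Aux2.integral_expand a b _ _
      (fun i j => MA1Aux2.quad_integrable hmom (u i).1 (u i).2 (v j).1 (v j).2)]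
    exact Finset.sum_congr rfl fun i _ => Finset.sum_congr rfl fun j _ => by
      rw [MA1Aux.mom4 hmeas hindep hmean hvar hkurt (u i).1 (u i).2 (v j).1 (v j).2]
  -- closed forms for the autocovariances
  have hγ00 : ∀ h : ℤ, γ 0 0 h =
      (if h = 0 then 3 else 0) + (if h = 1 then 1 else 0) + (if h = -1 then 1 else 0) := by
    intro h
    rw [hγ]
    rw [show (∫ ω, X h ω 0 * X 0 ω 0 ∂P)
        = ∫ ω, (∑ i, MA1Aux3.lsgn 0 i *
              e (MA1Aux3.lidx h 0 i).1 ω (MA1Aux3.lidx h 0 i).2) *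
          (∑ j, MA1Aux3.lsgn 0 j *
              e (MA1Aux3.lidx 0 0 j).1 ω (MA1Aux3.lidx 0 0 j).2) ∂P from
      integral_congr_ae (.of_forall fun ω => by
        simp only [hX]
        simp [MA1Aux3.lidx, MA1Aux3.lsgn, Fin.sum_univ_three]
        try ring
        try exact Or.inl trivial)]
    rw [expand2]
    simp only [MA1Aux3.lidx, MA1Aux3.lsgn, Fin.sum_univ_three, Prod.mk.injEq]
    norm_num
    by_cases h0 : h = 0
    · subst h0; norm_num
    · by_cases h1 : h = 1
      · subst h1; norm_num
      · by_cases hm : h = -1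
        · subst hm; norm_num
        · have e3 : ¬ (h - 1 = 0) := by omega
          have e4 : ¬ (h - 1 = -1) := by omega
          simp [h0, h1, hm, e3, e4]
  have hγ11 : ∀ h : ℤ, γ 1 1 h =
      (if h = 0 then 3 else 0) - (if h = 1 then 1 else 0) - (if h = -1 then 1 else 0) := by
    intro h
    rw [hγ]
    rw [show (∫ ω, X h ω 1 * X 0 ω 1 ∂P)
        = ∫ ω, (∑ i, MA1Aux3.lsgn 1 i *
              e (MA1Aux3.lidx h 1 i).1 ω (MA1Aux3.lidx h 1 i).2) *
          (∑ j, MA1Aux3.lsgn 1 j *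
              e (MA1Aux3.lidx 0 1 j).1 ω (MA1Aux3.lidx 0 1 j).2) ∂P from
      integral_congr_ae (.of_forall fun ω => by
        simp only [hX]
        simp [MA1Aux3.lidx, MA1Aux3.lsgn, Fin.sum_univ_three]
        try ring
        try exact Or.inl trivial)]
    rw [expand2]
    simp only [MA1Aux3.lidx, MA1Aux3.lsgn, Fin.sum_univ_three, Prod.mk.injEq]
    norm_num
    by_cases h0 : h = 0
    · subst h0; norm_num
    · by_cases h1 : h = 1
      · subst h1; norm_num
      · by_cases hm : h = -1
        · subst hm; norm_num
        · have e3 : ¬ (h - 1 = 0) := by omega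
          have e4 : ¬ (h - 1 = -1) := by omega
          simp [h0, h1, hm, e3, e4]
  have hγ01 : ∀ h : ℤ, γ 0 1 h =
      (if h = 1 then 1 else 0) + (if h = -1 then 1 else 0) := by
    intro h
    rw [hγ]
    rw [show (∫ ω, X h ω 0 * X 0 ω 1 ∂P)
        = ∫ ω, (∑ i, MA1Aux3.lsgn 0 i *
              e (MA1Aux3.lidx h 0 i).1 ω (MA1Aux3.lidx h 0 i).2) *
          (∑ j, MA1Aux3.lsgn 1 j *
              e (MA1Aux3.lidx 0 1 j).1 ω (MA1Aux3.lidx 0 1 j).2) ∂P from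
      integral_congr_ae (.of_forall fun ω => by
        simp only [hX]
        simp [MA1Aux3.lidx, MA1Aux3.lsgn, Fin.sum_univ_three]
        try ring
        try exact Or.inl trivial)]
    rw [expand2]
    simp only [MA1Aux3.lidx, MA1Aux3.lsgn, Fin.sum_univ_three, Prod.mk.injEq]
    norm_num
    by_cases h0 : h = 0
    · subst h0; norm_num
    · by_cases h1 : h = 1
      · subst h1; norm_num
      · by_cases hm : h = -1
        · subst hm; norm_num
        · have e3 : ¬ (h - 1 = 0) := by omega
          have e4 : ¬ (h - 1 = -1) := by omega
          simp [h0, h1, hm, e3, e4]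
  have hγ10 : ∀ h : ℤ, γ 1 0 h =
      (if h = 1 then 1 else 0) + (if h = -1 then 1 else 0) := by
    intro h
    rw [hγ]
    rw [show (∫ ω, X h ω 1 * X 0 ω 0 ∂P)
        = ∫ ω, (∑ i, MA1Aux3.lsgn 1 i *
              e (MA1Aux3.lidx h 1 i).1 ω (MA1Aux3.lidx h 1 i).2) *
          (∑ j, MA1Aux3.lsgn 0 j *
              e (MA1Aux3.lidx 0 0 j).1 ω (MA1Aux3.lidx 0 0 j).2) ∂P from
      integral_congr_ae (.of_forall fun ω => by
        simp only [hX]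
        simp [MA1Aux3.lidx, MA1Aux3.lsgn, Fin.sum_univ_three]
        try ring
        try exact Or.inl trivial)]
    rw [expand2]
    simp only [MA1Aux3.lidx, MA1Aux3.lsgn, Fin.sum_univ_three, Prod.mk.injEq]
    norm_num
    by_cases h0 : h = 0
    · subst h0; norm_num
    · by_cases h1 : h = 1
      · subst h1; norm_num
      · by_cases hm : h = -1
        · subst hm; norm_num
        · have e3 : ¬ (h - 1 = 0) := by omega
          have e4 : ¬ (h - 1 = -1) := by omega
          simp [h0, h1, hm, e3, e4]
  have hγ000 : γ 0 0 0 = 3 := by rw [hγ00]; norm_num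
  have hγ110 : γ 1 1 0 = 3 := by rw [hγ11]; norm_num
  have hγ010 : γ 0 1 0 = 0 := by rw [hγ01]; norm_num
  -- the fourth moment of the process
  have hM : ∀ t : ℤ, (∫ ω, (X t ω 0 * X t ω 1) * (X 0 ω 0 * X 0 ω 1) ∂P) =
      if t = 0 then 3 + η 0 + η 1 else 0 := by
    intro t
    rw [show (∫ ω, (X t ω 0 * X t ω 1) * (X 0 ω 0 * X 0 ω 1) ∂P)
        = ∫ ω, (∑ i, MA1Aux3.qsgn i *
              (e ((MA1Aux3.qidx t) i).1.1 ω ((MA1Aux3.qidx t) i).1.2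
                * e ((MA1Aux3.qidx t) i).2.1 ω ((MA1Aux3.qidx t) i).2.2)) *
            (∑ j, MA1Aux3.qsgn j *
              (e ((MA1Aux3.qidx 0) j).1.1 ω ((MA1Aux3.qidx 0) j).1.2
                * e ((MA1Aux3.qidx 0) j).2.1 ω ((MA1Aux3.qidx 0) j).2.2)) ∂P from
      integral_congr_ae (.of_forall fun ω => by
        simp only [hX]
        simp [MA1Aux3.qidx, MA1Aux3.qsgn, Fin.sum_univ_seven]
        ring)]
    rw [expand4]
    by_cases h0 : t = 0
    · subst h0
      norm_num [MA1Aux3.qidx, MA1Aux3.qsgn, Fin.sum_univ_seven, Prod.ext_iff]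
      ring
    · have e1 : ¬ (t = t - 1) := by omega
      have e2 : ¬ (t - 1 = t) := by omega
      by_cases h1 : t = 1
      · subst h1
        norm_num [MA1Aux3.qidx, MA1Aux3.qsgn, Fin.sum_univ_seven, Prod.ext_iff]
      · by_cases hm : t = -1
        · subst hm
          norm_num [MA1Aux3.qidx, MA1Aux3.qsgn, Fin.sum_univ_seven, Prod.ext_iff]
        · have e3 : ¬ (t - 1 = 0) := by omega
          have e4 : ¬ (t - 1 = -1) := by omega
          have e8 : ¬ (0 = t - 1) := fun h => e3 h.symm
          norm_num [MA1Aux3.qidx, MA1Aux3.qsgn, Fin.sum_univ_seven, Prod.ext_iff,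
            e1, e2, e3, e4, h0, h1, hm, e8]
  -- the fourth-order cumulant values
  have hcval : ∀ j : ℤ, c 0 1 0 1 j j 0 = if j = 0 then η 0 + η 1 - 6 else 0 := by
    intro j
    rw [hc]
    rw [show (∫ ω, X j ω 0 * X j ω 1 * X 0 ω 0 * X 0 ω 1 ∂P)
        = ∫ ω, (X j ω 0 * X j ω 1) * (X 0 ω 0 * X 0 ω 1) ∂P from
      integral_congr_ae (.of_forall fun ω => by ring)]
    rw [hM j, sub_self, sub_zero, hγ01 0, hγ00 j, hγ11 j, hγ01 j, hγ10 j]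
    by_cases h0 : j = 0
    · subst h0; norm_num; ring
    · by_cases h1 : j = 1
      · subst h1; norm_num
      · by_cases hm : j = -1
        · subst hm; norm_num
        · simp [h0, h1, hm]
  -- square roots
  have hs33 : Real.sqrt ((3:ℝ) * 3) = 3 := by
    rw [show (3:ℝ) * 3 = 3 ^ 2 by norm_num]
    exact Real.sqrt_sq (by norm_num)
  -- correlations
  have hρ010 : ρ 0 1 0 = 0 := by rw [hρ, hγ010, zero_div]
  have hρ00 : ∀ h : ℤ, ρ 0 0 h = γ 0 0 h / 3 := by
    intro h; rw [hρ, hγ000, hs33]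
  have hρ11 : ∀ h : ℤ, ρ 1 1 h = γ 1 1 h / 3 := by
    intro h; rw [hρ, hγ110, hs33]
  have hρ01 : ∀ h : ℤ, ρ 0 1 h = γ 0 1 h / 3 := by
    intro h; rw [hρ, hγ000, hγ110, hs33]
  have hρ10 : ∀ h : ℤ, ρ 1 0 h = γ 1 0 h / 3 := by
    intro h; rw [hρ, hγ000, hγ110, hs33]
  -- value of the summand in τ²
  have hSval : ∀ j : ℤ,
      (ρ 0 0 j * ρ 1 1 j + ρ 0 1 j * ρ 1 0 j +
        c 0 1 0 1 j j 0 / (γ 0 0 0 * γ 1 1 0) +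
        (1 / 2) * ρ 0 1 0 ^ 2 * (ρ 0 0 j ^ 2 + ρ 1 1 j ^ 2 + 2 * ρ 0 1 j ^ 2) -
        2 * ρ 0 1 0 * (ρ 0 0 j * ρ 1 0 j + ρ 0 1 j * ρ 1 1 j) +
        (1 / 4) * ρ 0 1 0 ^ 2 * (c 0 0 0 0 j j 0 / γ 0 0 0 ^ 2 +
          c 1 1 1 1 j j 0 / γ 1 1 0 ^ 2 + 2 * c 0 0 1 1 j j 0 / (γ 0 0 0 * γ 1 1 0)) -
        (ρ 0 1 0 / Real.sqrt (γ 0 0 0 * γ 1 1 0)) *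
          (c 0 1 0 0 j j 0 / γ 0 0 0 + c 0 1 1 1 j j 0 / γ 1 1 0))
      = if j = 0 then 1 + (η 0 + η 1 - 6) / 9 else 0 := by
    intro j
    rw [hρ010, hρ00 j, hρ11 j, hρ01 j, hρ10 j, hcval j, hγ000, hγ110,
      hγ00 j, hγ11 j, hγ01 j, hγ10 j]
    by_cases h0 : j = 0
    · subst h0; norm_num
    · by_cases h1 : j = 1
      · subst h1; norm_num
      · by_cases hm : j = -1
        · subst hm; norm_num
        · simp [h0, h1, hm]
  -- the sum of the cumulant terms
  have hcsum : (∑' j : ℤ, c 0 1 0 1 j j 0 / (γ 0 0 0 * γ 1 1 0))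
      = (η 0 + η 1 - 6) / 9 := by
    have step : ∀ j : ℤ, c 0 1 0 1 j j 0 / (γ 0 0 0 * γ 1 1 0)
        = if j = 0 then (η 0 + η 1 - 6) / 9 else 0 := by
      intro j
      rw [hcval j, hγ000, hγ110]
      by_cases h0 : j = 0
      · subst h0; norm_num
      · simp [h0]
    rw [tsum_congr step, tsum_eq_single (0:ℤ) (fun b hb => by simp [hb])]
    simp
  -- the value of τ²
  have hτval : τsq = 1 + (η 0 + η 1 - 6) / 9 := by
    rw [hτ, tsum_congr hSval, tsum_eq_single (0:ℤ) (fun b hb => by simp [hb])]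
    simp
  -- specific correlation values
  have r000 : ρ 0 0 0 = 1 := by rw [hρ00 0, hγ000]; norm_num
  have r110 : ρ 1 1 0 = 1 := by rw [hρ11 0, hγ110]; norm_num
  have r001 : ρ 0 0 1 = 1 / 3 := by rw [hρ00 1, hγ00 1]; norm_num
  have r111 : ρ 1 1 1 = -(1 / 3) := by rw [hρ11 1, hγ11 1]; norm_num
  have r011 : ρ 0 1 1 = 1 / 3 := by rw [hρ01 1, hγ01 1]; norm_num
  have r101 : ρ 1 0 1 = 1 / 3 := by rw [hρ10 1, hγ10 1]; norm_num
  refine ⟨hρ010, ?_, ?_⟩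
  · rw [hτval, r000, r110, r001, r111, r011, r101, hcsum]
    ring
  · rw [r000, r110, r001, r111, r011, r101, hcsum]
    ring

end
end
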